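/- Let k ≥ 3 and t ≥ k³ be integers, G a group, and ξ: Pol(K_k, K_t) → Pol(ℤ, G) a minion homomorphism. Let f, g ∈ Pol(K_k, K_t) be polymorphisms of the same arity n ≥ 3 that are of the same type (i.e., f(x, …, x) = g(x, …, x) for all x ∈ [k]) and that differ in exactly one point, i.e., there is exactly one tuple (a₁, …, aₙ) ∈ [k]ⁿ with f(a₁, …, aₙ) ≠ g(a₁, …, aₙ). Then ξ(f) = ξ(g). -/

import Mathlib

/-- `f : [k]ⁿ → [t]` is a polymorphism of the pair of complete graphs
`(K_k, K_t)` (with the binary disequality relation): it maps tuples that are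
coordinatewise distinct to distinct values. -/
def IsCliquePoly (k t : ℕ) {n : ℕ} (f : (Fin n → Fin k) → Fin t) : Prop :=
  ∀ x y : Fin n → Fin k, (∀ j, x j ≠ y j) → f x ≠ f y

/-- for `k ≥ 3`, `t ≥ k³`, a group `G` and a minion homomorphism
`ξ : Pol(K_k, K_t) → Pol(ℤ, G)`: if `f, g` are polymorphisms of the same arity
`n ≥ 3`, of the same type (equal on constant tuples), differing in exactly one
point, then `ξ(f) = ξ(g)`. -/
theorem minion_hom_eq_of_differ_one_point (k t : ℕ) (hk : 3 ≤ k) (ht : k ^ 3 ≤ t)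
    {G : Type*} [Group G]
    (ξ : ∀ n : ℕ, {f : (Fin n → Fin k) → Fin t // IsCliquePoly k t f} →
        ((Fin n → ℤ) → G))
    (hhom : ∀ n f, ∀ x y : Fin n → ℤ, ξ n f (x + y) = ξ n f x * ξ n f y)
    (hminor : ∀ (n n' : ℕ) (π : Fin n → Fin n')
        (f : {f : (Fin n → Fin k) → Fin t // IsCliquePoly k t f})
        (g : {g : (Fin n' → Fin k) → Fin t // IsCliquePoly k t g}),
        (∀ x, g.1 x = f.1 (fun j => x (π j))) →
        ∀ x, ξ n' g x = ξ n f (fun j => x (π j)))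
    (n : ℕ) (hn : 3 ≤ n)
    (f g : {f : (Fin n → Fin k) → Fin t // IsCliquePoly k t f})
    (htype : ∀ x : Fin k, f.1 (fun _ => x) = g.1 (fun _ => x))
    (hdiff : ∃! a : Fin n → Fin k, f.1 a ≠ g.1 a) :
    ξ n f = ξ n g := by
  classical
  obtain ⟨a, ha, huniq⟩ := hdiff
  have heq : ∀ b, b ≠ a → f.1 b = g.1 b := by
    intro b hb
    by_contra h
    exact hb (huniq b h)
  have hnz : 0 < n := by omega
  obtain ⟨p, q, hpq⟩ : ∃ p q : Fin n, a p ≠ a q := by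
    by_contra h
    push_neg at h
    have hconst : a = fun _ => a ⟨0, hnz⟩ := funext fun j => h j _
    rw [hconst] at ha
    exact ha (htype _)
  set fa := f.1 a with hfa
  set ga := g.1 a with hga
  have hkey : ∀ y : Fin n → Fin k, (∀ i, a i ≠ y i) → fa ≠ f.1 y ∧ ga ≠ f.1 y := by
    intro y hy
    have hya : y ≠ a := fun h => hy ⟨0, hnz⟩ (by rw [h])
    refine ⟨f.2 a y hy, ?_⟩
    rw [heq y hya]
    exact g.2 a y hy
  -- arity n+1 extension
  set Ffun : (Fin (n+1) → Fin k) → Fin t := fun x =>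
    if (fun i : Fin n => x i.castSucc) = a
    then (if x (Fin.last n) = a p then fa else ga)
    else f.1 (fun i : Fin n => x i.castSucc) with hFdef
  have hFpoly : IsCliquePoly k t Ffun := by
    intro x y hxy
    have hrest : ∀ i : Fin n, x i.castSucc ≠ y i.castSucc := fun i => hxy _
    simp only [hFdef]
    by_cases hx : (fun i : Fin n => x i.castSucc) = a
    · by_cases hy : (fun i : Fin n => y i.castSucc) = a
      · exact absurd ((congrFun hx ⟨0, hnz⟩).trans (congrFun hy ⟨0, hnz⟩).symm)
          (hrest ⟨0, hnz⟩)
      · have hk2 := hkey (fun i : Fin n => y i.castSucc)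
          (fun i => by rw [← congrFun hx i]; exact hrest i)
        rw [if_pos hx, if_neg hy]
        split_ifs
        · exact hk2.1
        · exact hk2.2
    · by_cases hy : (fun i : Fin n => y i.castSucc) = a
      · have hk2 := hkey (fun i : Fin n => x i.castSucc)
          (fun i => by rw [← congrFun hy i]; exact (hrest i).symm)
        rw [if_neg hx, if_pos hy]
        split_ifs
        · exact hk2.1.symm
        · exact hk2.2.symm
      · rw [if_neg hx, if_neg hy]
        exact f.2 _ _ hrest
  -- arity n+2 extension
  set Hfun : (Fin (n+2) → Fin k) → Fin t := fun x =>
    if (fun i : Fin n => x i.castSucc.castSucc) = a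
    then (if (x (Fin.last n).castSucc = a p ∧ x (Fin.last (n+1)) = a p) then fa else ga)
    else f.1 (fun i : Fin n => x i.castSucc.castSucc) with hHdef
  have hHpoly : IsCliquePoly k t Hfun := by
    intro x y hxy
    have hrest : ∀ i : Fin n, x i.castSucc.castSucc ≠ y i.castSucc.castSucc := fun i => hxy _
    simp only [hHdef]
    by_cases hx : (fun i : Fin n => x i.castSucc.castSucc) = a
    · by_cases hy : (fun i : Fin n => y i.castSucc.castSucc) = a
      · exact absurd ((congrFun hx ⟨0, hnz⟩).trans (congrFun hy ⟨0, hnz⟩).symm)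
          (hrest ⟨0, hnz⟩)
      · have hk2 := hkey (fun i : Fin n => y i.castSucc.castSucc)
          (fun i => by rw [← congrFun hx i]; exact hrest i)
        rw [if_pos hx, if_neg hy]
        split_ifs
        · exact hk2.1
        · exact hk2.2
    · by_cases hy : (fun i : Fin n => y i.castSucc.castSucc) = a
      · have hk2 := hkey (fun i : Fin n => x i.castSucc.castSucc)
          (fun i => by rw [← congrFun hy i]; exact (hrest i).symm)
        rw [if_neg hx, if_pos hy]
        split_ifs
        · exact hk2.1.symm
        · exact hk2.2.symm
      · rw [if_neg hx, if_neg hy]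
        exact f.2 _ _ hrest
  set FF : {h : (Fin (n+1) → Fin k) → Fin t // IsCliquePoly k t h} := ⟨Ffun, hFpoly⟩ with hFF
  set HH : {h : (Fin (n+2) → Fin k) → Fin t // IsCliquePoly k t h} := ⟨Hfun, hHpoly⟩ with hHH
  -- the minor maps
  set π₁ : Fin (n+1) → Fin n := fun j => Fin.lastCases p (fun i => i) j with hπ₁
  set π₂ : Fin (n+1) → Fin n := fun j => Fin.lastCases q (fun i => i) j with hπ₂
  set ρd : Fin (n+2) → Fin (n+1) := fun j => Fin.lastCases (Fin.last n) (fun i => i) j with hρd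
  set ρ₁ : Fin (n+2) → Fin (n+1) := fun j => Fin.lastCases p.castSucc (fun i => i) j with hρ₁
  set ρ₂ : Fin (n+2) → Fin (n+1) :=
    fun j => Fin.lastCases (Fin.last n)
      (fun i => Fin.lastCases p.castSucc Fin.castSucc i) j with hρ₂
  have hmin1 : ∀ x, f.1 x = FF.1 (fun j => x (π₁ j)) := by
    intro x
    have hre : (fun i : Fin n => x (π₁ i.castSucc)) = x := by
      funext i; simp [hπ₁]
    simp only [hFF, hFdef, hπ₁, Fin.lastCases_last, Fin.lastCases_castSucc]
    by_cases hxa : x = a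
    · rw [if_pos (by rw [show (fun i : Fin n => x i) = x from rfl, hxa]),
        if_pos (by rw [hxa]), hxa]
    · rw [if_neg (by rw [show (fun i : Fin n => x i) = x from rfl]; exact hxa)]
  have hmin2 : ∀ x, g.1 x = FF.1 (fun j => x (π₂ j)) := by
    intro x
    simp only [hFF, hFdef, hπ₂, Fin.lastCases_last, Fin.lastCases_castSucc]
    by_cases hxa : x = a
    · rw [if_pos (by rw [show (fun i : Fin n => x i) = x from rfl, hxa]),
        if_neg (by rw [hxa]; exact fun h => hpq h.symm), hxa]
    · rw [if_neg (by rw [show (fun i : Fin n => x i) = x from rfl]; exact hxa)]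
      exact (heq x hxa).symm
  have hmind : ∀ z, FF.1 z = HH.1 (fun j => z (ρd j)) := by
    intro z
    simp only [hFF, hFdef, hHH, hHdef, hρd, Fin.lastCases_last, Fin.lastCases_castSucc,
      and_self]
  have hmin3 : ∀ z, FF.1 z = HH.1 (fun j => z (ρ₁ j)) := by
    intro z
    simp only [hFF, hFdef, hHH, hHdef, hρ₁, Fin.lastCases_last, Fin.lastCases_castSucc]
    by_cases hz : (fun i : Fin n => z i.castSucc) = a
    · have hp : z p.castSucc = a p := congrFun hz p
      rw [if_pos hz, if_pos hz]
      congr 1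
      simp [hp]
    · rw [if_neg hz, if_neg hz]
  have hmin4 : ∀ z, FF.1 z = HH.1 (fun j => z (ρ₂ j)) := by
    intro z
    simp only [hFF, hFdef, hHH, hHdef, hρ₂, Fin.lastCases_last, Fin.lastCases_castSucc]
    by_cases hz : (fun i : Fin n => z i.castSucc) = a
    · have hp : z p.castSucc = a p := congrFun hz p
      rw [if_pos hz, if_pos hz]
      congr 1
      simp [hp]
    · rw [if_neg hz, if_neg hz]
  have h1 := hminor (n+1) n π₁ FF f hmin1
  have h2 := hminor (n+1) n π₂ FF g hmin2
  have h3 := hminor (n+2) (n+1) ρd HH FF hmind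
  have h4 := hminor (n+2) (n+1) ρ₁ HH FF hmin3
  have h5 := hminor (n+2) (n+1) ρ₂ HH FF hmin4
  set e : Fin (n+1) → ℤ := fun j => if j = Fin.last n then 1 else 0 with he
  have hsum : (fun j => e (ρd j)) = (fun j => e (ρ₁ j)) + (fun j => e (ρ₂ j)) := by
    funext j
    induction j using Fin.lastCases with
    | last =>
      simp [he, hρd, hρ₁, hρ₂, Pi.add_apply, (Fin.castSucc_lt_last p).ne]
    | cast i =>
      induction i using Fin.lastCases with
      | last =>
        simp [he, hρd, hρ₁, hρ₂, Pi.add_apply, (Fin.castSucc_lt_last p).ne]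
      | cast i' =>
        simp [he, hρd, hρ₁, hρ₂, Pi.add_apply, (Fin.castSucc_lt_last i').ne]
  have hE : ξ (n+1) FF e = 1 := by
    have hx : ξ (n+1) FF e = ξ (n+1) FF e * ξ (n+1) FF e := by
      conv_lhs => rw [h3 e]
      rw [hsum, hhom (n+2) HH, ← h4 e, ← h5 e]
    exact (mul_eq_left.mp hx.symm)
  have hzero : ξ (n+1) FF 0 = 1 := by
    have h0 : ξ (n+1) FF 0 = ξ (n+1) FF 0 * ξ (n+1) FF 0 := by
      rw [← hhom (n+1) FF 0 0, add_zero]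
    exact (mul_eq_left.mp h0.symm)
  have hneg : ξ (n+1) FF (-e) = 1 := by
    have := hhom (n+1) FF e (-e)
    rw [add_neg_cancel, hzero, hE, one_mul] at this
    exact this.symm
  have hpow : ∀ c : ℤ, ξ (n+1) FF (c • e) = 1 := by
    intro c
    induction c using Int.induction_on with
    | zero => rw [zero_smul]; exact hzero
    | succ c ih =>
      rw [add_smul, one_smul, hhom (n+1) FF, ih, hE, one_mul]
    | pred c ih =>
      rw [sub_smul, one_smul, sub_eq_add_neg, hhom (n+1) FF, ih, hneg, one_mul]
  funext x
  rw [h1 x, h2 x]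
  have hx12 : (fun j => x (π₁ j)) = (x p - x q) • e + (fun j => x (π₂ j)) := by
    funext j
    induction j using Fin.lastCases with
    | last =>
      simp [he, hπ₁, hπ₂, Pi.add_apply, Pi.smul_apply]
    | cast i =>
      simp [he, hπ₁, hπ₂, Pi.add_apply, Pi.smul_apply, (Fin.castSucc_lt_last i).ne]
  rw [hx12, hhom (n+1) FF, hpow, one_mul]
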